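/- Let a, b be real numbers with 0 < a ≤ b. Then for every x with 0 < x < π/b, the second derivative of the function x ↦ sin(a·x)/sin(b·x) at x is nonnegative; equivalently, it equals (sin(a·x)/sin(b·x)) · [ (b·cot(b·x) − a·cot(a·x))² + b²/sin²(b·x) − a²/sin²(a·x) ] ≥ 0. -/

import Mathlib

open Real

lemma stmt_15_alg (a b s c S C : ℝ) (hs : s ≠ 0) (hS : S ≠ 0)
    (hpa : c^2 = 1 - s^2) (hpb : C^2 = 1 - S^2) :
    ((a * -(a * s) * S + a * c * (b * C) - (b * (a * c) * C + b * s * -(b * S))) * S^2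
        - (a * c * S - b * s * C) * (2 * S * (b * C))) / (S^2)^2
      = (s / S) * ((b * (C / S) - a * (c / s)) ^ 2 + b ^ 2 / S ^ 2 - a ^ 2 / s ^ 2) := by
  field_simp
  linear_combination (b^2*s^2) * hpb - (a^2*S^2) * hpa

/-- For `0 < a ≤ b` and `0 < x < π/b`, the second derivative of
`x ↦ sin(a·x)/sin(b·x)` at `x` equals
`(sin(a·x)/sin(b·x)) · [(b·cot(b·x) − a·cot(a·x))² + b²/sin²(b·x) − a²/sin²(a·x)]`
and is nonnegative. -/
theorem stmt_15 (a b : ℝ) (ha : 0 < a) (hab : a ≤ b) :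
    ∀ x : ℝ, 0 < x → x < π / b →
      iteratedDeriv 2 (fun t => sin (a * t) / sin (b * t)) x =
        (sin (a * x) / sin (b * x)) *
          ((b * (cos (b * x) / sin (b * x)) - a * (cos (a * x) / sin (a * x))) ^ 2 +
            b ^ 2 / sin (b * x) ^ 2 - a ^ 2 / sin (a * x) ^ 2) ∧
      0 ≤ iteratedDeriv 2 (fun t => sin (a * t) / sin (b * t)) x := by
  intro x hx hxb
  have hb : 0 < b := lt_of_lt_of_le ha hab
  have hsin : ∀ t ∈ Set.Ioo (0:ℝ) (π/b), 0 < sin (b*t) := by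
    intro t ht
    exact sin_pos_of_pos_of_lt_pi (mul_pos hb ht.1)
      (by rw [mul_comm]; exact (lt_div_iff₀ hb).mp ht.2)
  have hsb : 0 < sin (b*x) := hsin x ⟨hx, hxb⟩
  have hbxπ : b * x < π := by rw [mul_comm]; exact (lt_div_iff₀ hb).mp hxb
  have haxb : a * x ≤ b * x := by nlinarith
  have hsa : 0 < sin (a*x) := sin_pos_of_pos_of_lt_pi (by positivity) (lt_of_le_of_lt haxb hbxπ)
  have dsin : ∀ (c t : ℝ), HasDerivAt (fun t => sin (c*t)) (c * cos (c*t)) t := by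
    intro c t
    simpa [mul_comm, Function.comp_def] using (Real.hasDerivAt_sin (c*t)).comp t ((hasDerivAt_id t).const_mul c)
  have dcos : ∀ (c t : ℝ), HasDerivAt (fun t => cos (c*t)) (-(c * sin (c*t))) t := by
    intro c t
    simpa [mul_comm, Function.comp_def] using (Real.hasDerivAt_cos (c*t)).comp t ((hasDerivAt_id t).const_mul c)
  set g : ℝ → ℝ := fun t =>
    (a * cos (a*t) * sin (b*t) - b * sin (a*t) * cos (b*t)) / (sin (b*t))^2 with hg
  have hf : ∀ t ∈ Set.Ioo (0:ℝ) (π/b),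
      HasDerivAt (fun t => sin (a * t) / sin (b * t)) (g t) t := by
    intro t ht
    have hS := (hsin t ht).ne'
    have h := (dsin a t).div (dsin b t) hS
    convert h using 1
    · rfl
    · rfl
    · rfl
    rw [hg]
    field_simp
  have hev : deriv (fun t => sin (a * t) / sin (b * t)) =ᶠ[nhds x] g := by
    filter_upwards [isOpen_Ioo.mem_nhds (⟨hx, hxb⟩ : x ∈ Set.Ioo (0:ℝ) (π/b))] with t ht
    exact (hf t ht).deriv
  have hgd : HasDerivAt g
      (((a * -(a * sin (a*x)) * sin (b*x) + a * cos (a*x) * (b * cos (b*x))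
          - (b * (a * cos (a*x)) * cos (b*x) + b * sin (a*x) * -(b * sin (b*x))))
          * (sin (b*x))^2
        - (a * cos (a*x) * sin (b*x) - b * sin (a*x) * cos (b*x))
          * (2 * sin (b*x) * (b * cos (b*x)))) / ((sin (b*x))^2)^2) x := by
    have hnum : HasDerivAt (fun t => a * cos (a*t) * sin (b*t) - b * sin (a*t) * cos (b*t))
        (a * -(a * sin (a*x)) * sin (b*x) + a * cos (a*x) * (b * cos (b*x))
          - (b * (a * cos (a*x)) * cos (b*x) + b * sin (a*x) * -(b * sin (b*x)))) x := by
      exact (((dcos a x).const_mul a).mul (dsin b x)).sub (((dsin a x).const_mul b).mul (dcos b x))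
    have hden : HasDerivAt (fun t => (sin (b*t))^2) (2 * sin (b*x) * (b * cos (b*x))) x := by
      have := (dsin b x).mul (dsin b x)
      convert this using 1
      · rfl
      · rfl
      · ext t; rw [Pi.mul_apply]; ring
      · ring
    exact hnum.div hden (by positivity)
  have hid : iteratedDeriv 2 (fun t => sin (a * t) / sin (b * t)) x =
        (sin (a * x) / sin (b * x)) *
          ((b * (cos (b * x) / sin (b * x)) - a * (cos (a * x) / sin (a * x))) ^ 2 +
            b ^ 2 / sin (b * x) ^ 2 - a ^ 2 / sin (a * x) ^ 2) := by
    rw [iteratedDeriv_succ, iteratedDeriv_one, hev.deriv_eq, hgd.deriv]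
    exact stmt_15_alg a b (sin (a*x)) (cos (a*x)) (sin (b*x)) (cos (b*x))
      hsa.ne' hsb.ne' (cos_sq' _) (cos_sq' _)
  refine ⟨hid, ?_⟩
  rw [hid]
  have hkey : a * sin (b*x) ≤ b * sin (a*x) := by
    have hmem0 : (0:ℝ) ∈ Set.Icc (0:ℝ) π := ⟨le_refl _, le_of_lt pi_pos⟩
    have hmem : b*x ∈ Set.Icc (0:ℝ) π := ⟨by positivity, le_of_lt hbxπ⟩
    have hw1 : (0:ℝ) ≤ 1 - a/b := by
      have : a/b ≤ 1 := (div_le_one hb).mpr hab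
      linarith
    have hw2 : (0:ℝ) ≤ a/b := by positivity
    have hcc := strictConcaveOn_sin_Icc.concaveOn.2 hmem0 hmem hw1 hw2 (by ring)
    simp only [smul_eq_mul, sin_zero, mul_zero, zero_add] at hcc
    have heq : a/b * (b*x) = a * x := by field_simp
    rw [heq] at hcc
    calc a * sin (b*x) = b * ((a/b) * sin (b*x)) := by field_simp
      _ ≤ b * sin (a*x) := by nlinarith [hcc]
  have hdivle : a / sin (a*x) ≤ b / sin (b*x) := by
    rw [div_le_div_iff₀ hsa hsb]
    nlinarith
  have hsq : a^2 / sin (a*x)^2 ≤ b^2 / sin (b*x)^2 := by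
    rw [← div_pow, ← div_pow]
    exact pow_le_pow_left₀ (by positivity) hdivle 2
  have h1 : 0 ≤ sin (a*x) / sin (b*x) := by positivity
  nlinarith [mul_nonneg h1 (sq_nonneg (b * (cos (b * x) / sin (b * x)) - a * (cos (a * x) / sin (a * x)))),
    mul_nonneg h1 (sub_nonneg.mpr hsq)]
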